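/- Let μ be the Haar probability measure on X_L and let x ∈ ℤ², x ≠ 0. Then for all choices ε, ε' ∈ {±1}, μ{ w ∈ X_L | w(0) = ε and w(x) = ε' } = 1/4. -/

import Mathlib

open MeasureTheory

def LedrappierSet : Set ((ℤ × ℤ) → ℤˣ) :=
  {w | ∀ x : ℤ × ℤ, w x * w (x + (1, 0)) * w (x + (0, 1)) = 1}

/-- Generalized mod-2-relevant binomial exponent for configurations in `X_L`. -/
private def bexp (n k : ℤ) : ℕ :=
  if 0 ≤ k then
    (if 0 ≤ n then n.toNat.choose k.toNat else (-n - 1 + k).toNat.choose k.toNat)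
  else 0

private lemma bexp_zero (n : ℤ) : bexp n 0 = 1 := by
  unfold bexp
  simp [Nat.choose_zero_right]

private lemma bexp_zero_left (k : ℤ) (hk : k ≠ 0) : bexp 0 k = 0 := by
  unfold bexp
  rcases lt_or_ge k 0 with h | h
  · simp [not_le.2 h]
  · have : 0 < k := lt_of_le_of_ne h (Ne.symm hk)
    have h1 : (0 : ℤ).toNat = 0 := rfl
    simp only [le_refl, if_true, h]
    rw [h1, Nat.choose_eq_zero_of_lt]
    omega

private lemma bexp_diag (b : ℤ) (hb : 0 ≤ b) : bexp b b = 1 := by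
  unfold bexp
  simp [hb, Nat.choose_self]

private lemma bexp_pascal (n k : ℤ) :
    Even (bexp n k + bexp n (k - 1) + bexp (n + 1) k) := by
  rcases lt_or_ge k 0 with hk | hk
  · unfold bexp
    simp [not_le.2 hk, not_le.2 (by omega : k - 1 < 0), not_le.2 (by omega : k < 1)]
  rcases eq_or_lt_of_le hk with hk0 | hkpos
  · -- k = 0
    have : k = 0 := hk0.symm
    subst this
    simp only [bexp_zero]
    have h1 : bexp n (0 - 1 : ℤ) = 0 := by unfold bexp; norm_num
    rw [h1]
    exact ⟨1, by ring⟩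
  · -- k ≥ 1
    have hk1 : (1 : ℤ) ≤ k := hkpos
    have hkt : k.toNat = (k - 1).toNat + 1 := by omega
    rcases le_or_gt 0 n with hn | hn
    · -- n ≥ 0 : exact Pascal
      have hnt : (n + 1).toNat = n.toNat + 1 := by omega
      have e1 : bexp (n + 1) k = n.toNat.choose (k - 1).toNat + n.toNat.choose k.toNat := by
        unfold bexp
        simp only [hk, if_true, (by omega : (0:ℤ) ≤ n + 1), if_true, hnt, hkt,
          Nat.choose_succ_succ]
      have e2 : bexp n k = n.toNat.choose k.toNat := by
        unfold bexp; simp [hk, hn]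
      have e3 : bexp n (k - 1) = n.toNat.choose (k - 1).toNat := by
        unfold bexp; simp [(by omega : (0:ℤ) ≤ k - 1), hn, hk1]
      rw [e1, e2, e3]
      exact ⟨n.toNat.choose k.toNat + n.toNat.choose (k - 1).toNat, by ring⟩
    rcases eq_or_lt_of_le (by omega : n ≤ -1) with hn1 | hn2
    · -- n = -1
      subst hn1
      have e1 : bexp ((-1 : ℤ) + 1) k = 0 := by
        rw [(by ring : (-1 : ℤ) + 1 = 0)]
        exact bexp_zero_left k (by omega)
      have e2 : bexp (-1) k = 1 := by
        unfold bexp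
        simp only [hk, if_true, (by norm_num : ¬ (0:ℤ) ≤ -1), if_false]
        rw [(by ring : -(-1 : ℤ) - 1 + k = k), Nat.choose_self]
      have e3 : bexp (-1) (k - 1) = 1 := by
        unfold bexp
        simp only [(by omega : (0:ℤ) ≤ k - 1), if_true,
          (by norm_num : ¬ (0:ℤ) ≤ -1), if_false]
        rw [(by ring : -(-1 : ℤ) - 1 + (k - 1) = k - 1), Nat.choose_self]
      rw [e1, e2, e3]
      exact ⟨1, by ring⟩
    · -- n ≤ -2
      have hn2' : n + 1 < 0 := by omega
      set s : ℕ := (-n - 2).toNat with hs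
      set t : ℕ := k.toNat with ht
      have hts : t = (k - 1).toNat + 1 := hkt
      have e2 : bexp n k = (s + t + 1).choose t := by
        unfold bexp
        simp only [hk, if_true, not_le.2 hn, if_false]
        congr 1
        omega
      have e3 : bexp n (k - 1) = (s + t).choose (k - 1).toNat := by
        unfold bexp
        simp only [(by omega : (0:ℤ) ≤ k - 1), if_true, not_le.2 hn, if_false]
        congr 1
        omega
      have e1 : bexp (n + 1) k = (s + t).choose t := by
        unfold bexp
        simp only [hk, if_true, not_le.2 hn2', if_false]
        congr 1
        omega
      have pas : (s + t + 1).choose t = (s + t).choose (k - 1).toNat + (s + t).choose t := by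
        rw [hts, Nat.choose_succ_succ, Nat.succ_eq_add_one, ← hts]
      rw [e1, e2, e3, pas]
      exact ⟨(s + t).choose (k - 1).toNat + (s + t).choose t, by ring⟩

/-- The configuration in `X_L` generated by a single `-1` at position `m₀` on row `0`. -/
private def wrow (m₀ : ℤ) : (ℤ × ℤ) → ℤˣ := fun p => (-1) ^ bexp p.2 (m₀ - p.1)

private lemma wrow_mem (m₀ : ℤ) : wrow m₀ ∈ LedrappierSet := by
  intro y
  obtain ⟨m, n⟩ := y
  have h2 : ((m, n) : ℤ × ℤ) + (1, 0) = (m + 1, n) := by simp [Prod.ext_iff]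
  have h3 : ((m, n) : ℤ × ℤ) + (0, 1) = (m, n + 1) := by simp [Prod.ext_iff]
  show wrow m₀ (m, n) * wrow m₀ ((m, n) + (1, 0)) * wrow m₀ ((m, n) + (0, 1)) = 1
  rw [h2, h3]
  show (-1 : ℤˣ) ^ bexp n (m₀ - m) * (-1) ^ bexp n (m₀ - (m + 1)) *
      (-1) ^ bexp (n + 1) (m₀ - m) = 1
  rw [← pow_add, ← pow_add]
  have h : m₀ - (m + 1) = (m₀ - m) - 1 := by ring
  rw [h]
  exact Even.neg_one_pow (bexp_pascal n (m₀ - m))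

/-- The transpose of `wrow m₀`, also in `X_L` by symmetry of the defining relation. -/
private def wcol (m₀ : ℤ) : (ℤ × ℤ) → ℤˣ := fun p => wrow m₀ (p.2, p.1)

private lemma wcol_mem (m₀ : ℤ) : wcol m₀ ∈ LedrappierSet := by
  intro y
  obtain ⟨m, n⟩ := y
  have h2 : ((m, n) : ℤ × ℤ) + (1, 0) = (m + 1, n) := by simp [Prod.ext_iff]
  have h3 : ((m, n) : ℤ × ℤ) + (0, 1) = (m, n + 1) := by simp [Prod.ext_iff]
  show wcol m₀ (m, n) * wcol m₀ ((m, n) + (1, 0)) * wcol m₀ ((m, n) + (0, 1)) = 1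
  rw [h2, h3]
  show wrow m₀ (n, m) * wrow m₀ (n, m + 1) * wrow m₀ (n + 1, m) = 1
  have h := wrow_mem m₀ (n, m)
  have h2' : ((n, m) : ℤ × ℤ) + (1, 0) = (n + 1, m) := by simp [Prod.ext_iff]
  have h3' : ((n, m) : ℤ × ℤ) + (0, 1) = (n, m + 1) := by simp [Prod.ext_iff]
  rw [h2', h3'] at h
  rw [mul_right_comm] at h
  exact h

private lemma ledrappier_mul {u v : (ℤ × ℤ) → ℤˣ} (hu : u ∈ LedrappierSet)
    (hv : v ∈ LedrappierSet) : u * v ∈ LedrappierSet := by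
  intro y
  have h1 := hu y
  have h2 := hv y
  show u y * v y * (u _ * v _) * (u _ * v _) = 1
  calc u y * v y * (u (y + (1,0)) * v (y + (1,0))) * (u (y + (0,1)) * v (y + (0,1)))
      = (u y * u (y + (1,0)) * u (y + (0,1))) * (v y * v (y + (1,0)) * v (y + (0,1))) := by
        ac_rfl
    _ = 1 := by rw [h1, h2, mul_one]

private lemma wrow_val (m₀ : ℤ) (p : ℤ × ℤ) :
    wrow m₀ p = (-1) ^ bexp p.2 (m₀ - p.1) := rfl

/-- Existence of `u ∈ X_L` with `u 0 = 1` and `u x = -1`. -/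
private lemma exists_one_neg (x : ℤ × ℤ) (hx : x ≠ 0) :
    ∃ u ∈ LedrappierSet, u (0, 0) = 1 ∧ u x = -1 := by
  obtain ⟨a, b⟩ := x
  have hab : ¬ (a = 0 ∧ b = 0) := by
    intro ⟨h1, h2⟩; exact hx (by simp [h1, h2, Prod.ext_iff])
  rcases le_or_gt 0 b with hb | hb
  · by_cases hs : a + b = 0
    · -- then a ≠ 0
      have ha : a ≠ 0 := by
        intro h; exact hab ⟨h, by omega⟩
      refine ⟨wrow a, wrow_mem a, ?_, ?_⟩
      · rw [wrow_val]
        simp only [sub_zero]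
        rw [bexp_zero_left a ha, pow_zero]
      · rw [wrow_val]
        simp only
        rw [(by ring : a - a = 0), bexp_zero, pow_one]
    · refine ⟨wrow (a + b), wrow_mem (a + b), ?_, ?_⟩
      · rw [wrow_val]
        simp only [sub_zero]
        rw [bexp_zero_left (a + b) hs, pow_zero]
      · rw [wrow_val]
        simp only
        rw [(by ring : a + b - a = b), bexp_diag b hb, pow_one]
  · by_cases ha : a = 0
    · -- a = 0, b < 0 : use the transposed configuration
      subst ha
      refine ⟨wcol b, wcol_mem b, ?_, ?_⟩
      · show wrow b (0, 0) = 1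
        rw [wrow_val]
        simp only [sub_zero]
        rw [bexp_zero_left b (by omega), pow_zero]
      · show wrow b (b, 0) = -1
        rw [wrow_val]
        simp only
        rw [(by ring : b - b = 0), bexp_zero, pow_one]
    · refine ⟨wrow a, wrow_mem a, ?_, ?_⟩
      · rw [wrow_val]
        simp only [sub_zero]
        rw [bexp_zero_left a ha, pow_zero]
      · rw [wrow_val]
        simp only
        rw [(by ring : a - a = 0), bexp_zero, pow_one]

/-- Existence of `v ∈ X_L` with `v 0 = -1` and `v x = 1`. -/
private lemma exists_neg_one (x : ℤ × ℤ) (hx : x ≠ 0) :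
    ∃ v ∈ LedrappierSet, v (0, 0) = -1 ∧ v x = 1 := by
  have h0 : wrow 0 (0, 0) = -1 := by
    rw [wrow_val]
    simp only [sub_zero]
    rw [bexp_zero, pow_one]
  rcases Int.units_eq_one_or (wrow 0 x) with h | h
  · exact ⟨wrow 0, wrow_mem 0, h0, h⟩
  · obtain ⟨u, hu, hu0, hux⟩ := exists_one_neg x hx
    refine ⟨wrow 0 * u, ledrappier_mul (wrow_mem 0) hu, ?_, ?_⟩
    · show wrow 0 (0, 0) * u (0, 0) = -1
      rw [h0, hu0, mul_one]
    · show wrow 0 x * u x = 1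
      rw [h, hux]
      decide

private lemma zunits_top : (Units.instMeasurableSpace : MeasurableSpace ℤˣ) = ⊤ := by
  rw [Units.instMeasurableSpace]
  refine le_antisymm le_top ?_
  intro s _
  exact ⟨Units.val '' s, trivial, Set.preimage_image_eq s (fun _ _ h => Units.ext h)⟩

private lemma zunits_measurableSet (s : Set ℤˣ) : MeasurableSet s := by
  have h : MeasurableSet[⊤] s := trivial
  rwa [← zunits_top] at h

private lemma zunits_measurable_from {f : ℤˣ → ℤˣ} : Measurable f := by
  intro s _
  exact zunits_measurableSet _

/-- Under the Haar probability measure of `X_L`, every two-point cylinder set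
determined by the values at `0` and at some `x ≠ 0` has measure `1/4`. -/
theorem ledrappier_twopoint_cylinders (μ : Measure ((ℤ × ℤ) → ℤˣ))
    [IsProbabilityMeasure μ] (hsupp : μ LedrappierSet = 1)
    (hinv : ∀ v ∈ LedrappierSet, Measure.map (fun w => v * w) μ = μ)
    (x : ℤ × ℤ) (hx : x ≠ 0) :
    ∀ ε ε' : ℤˣ, μ {w | w (0, 0) = ε ∧ w x = ε'} = 1 / 4 := by
  intro ε ε'
  set S : ℤˣ → ℤˣ → Set ((ℤ × ℤ) → ℤˣ) :=
    fun a b => {w | w (0, 0) = a ∧ w x = b} with hS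
  have hmeas : ∀ a b, MeasurableSet (S a b) := by
    intro a b
    have h1 : S a b = (fun w : (ℤ × ℤ) → ℤˣ => w (0, 0)) ⁻¹' {a} ∩
        (fun w : (ℤ × ℤ) → ℤˣ => w x) ⁻¹' {b} := by
      ext w; simp [hS]
    rw [h1]
    have ha : Measurable fun w : (ℤ × ℤ) → ℤˣ => w (0, 0) := measurable_pi_apply _
    have hb : Measurable fun w : (ℤ × ℤ) → ℤˣ => w x := measurable_pi_apply _
    exact (ha (zunits_measurableSet {a})).inter (hb (zunits_measurableSet {b}))
  have hcancel : ∀ c d a : ℤˣ, (c * d = a ↔ d = c * a) := by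
    intro c d a
    rcases Int.units_eq_one_or c with rfl | rfl
    · simp
    · constructor
      · intro h; rw [← h]; rw [← mul_assoc]; norm_num
      · intro h; rw [h, ← mul_assoc]; norm_num
  have key : ∀ v ∈ LedrappierSet, ∀ a b : ℤˣ,
      μ (S a b) = μ (S (v (0, 0) * a) (v x * b)) := by
    intro v hv a b
    have hmapm : Measurable (fun w : (ℤ × ℤ) → ℤˣ => v * w) := by
      apply measurable_pi_lambda
      intro p
      have hp : Measurable fun w : (ℤ × ℤ) → ℤˣ => w p := measurable_pi_apply p
      exact Measurable.comp (g := fun a : ℤˣ => v p * a)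
        (f := fun w : (ℤ × ℤ) → ℤˣ => w p) zunits_measurable_from hp
    calc μ (S a b) = Measure.map (fun w => v * w) μ (S a b) := by rw [hinv v hv]
      _ = μ ((fun w => v * w) ⁻¹' (S a b)) := Measure.map_apply hmapm (hmeas a b)
      _ = μ (S (v (0, 0) * a) (v x * b)) := by
          congr 1
          ext w
          simp only [hS, Set.mem_preimage, Set.mem_setOf_eq, Pi.mul_apply]
          rw [hcancel (v (0, 0)) (w (0, 0)) a, hcancel (v x) (w x) b]
  obtain ⟨u, hu, hu0, hux⟩ := exists_one_neg x hx
  obtain ⟨v, hv, hv0, hvx⟩ := exists_neg_one x hx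
  have h1 : μ (S ε ε') = μ (S ε (-ε')) := by
    have := key u hu ε ε'
    rwa [hu0, hux, one_mul, neg_one_mul] at this
  have h2 : μ (S ε ε') = μ (S (-ε) ε') := by
    have := key v hv ε ε'
    rwa [hv0, hvx, one_mul, neg_one_mul] at this
  have h3 : μ (S ε ε') = μ (S (-ε) (-ε')) := by
    rw [h2]
    have := key u hu (-ε) ε'
    rwa [hu0, hux, one_mul, neg_one_mul] at this
  have hne : ∀ c : ℤˣ, c ≠ -c := by
    intro c
    rcases Int.units_eq_one_or c with rfl | rfl <;> decide
  have hdich : ∀ c d : ℤˣ, c = d ∨ c = -d := by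
    intro c d
    rcases Int.units_eq_one_or c with rfl | rfl <;>
      rcases Int.units_eq_one_or d with rfl | rfl <;> simp
  have hcover : S ε ε' ∪ S ε (-ε') ∪ S (-ε) ε' ∪ S (-ε) (-ε') = Set.univ := by
    ext w
    simp only [hS, Set.mem_union, Set.mem_setOf_eq, Set.mem_univ, iff_true]
    rcases hdich (w (0, 0)) ε with h | h <;> rcases hdich (w x) ε' with h' | h' <;> tauto
  have hd12 : Disjoint (S ε ε') (S ε (-ε')) := by
    rw [Set.disjoint_left]
    rintro w ⟨_, hw2⟩ ⟨_, hw2'⟩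
    exact hne ε' (hw2.symm.trans hw2')
  have hd3 : Disjoint (S ε ε' ∪ S ε (-ε')) (S (-ε) ε') := by
    rw [Set.disjoint_left]
    rintro w (⟨hw1, _⟩ | ⟨hw1, _⟩) ⟨hw1', _⟩ <;>
      exact hne ε (hw1.symm.trans hw1')
  have hd4 : Disjoint (S ε ε' ∪ S ε (-ε') ∪ S (-ε) ε') (S (-ε) (-ε')) := by
    rw [Set.disjoint_left]
    rintro w ((⟨hw1, _⟩ | ⟨hw1, _⟩) | ⟨_, hw2⟩) ⟨hw1', hw2'⟩
    · exact hne ε (hw1.symm.trans hw1')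
    · exact hne ε (hw1.symm.trans hw1')
    · exact hne ε' (hw2.symm.trans hw2')
  have hsum : μ (S ε ε') + μ (S ε (-ε')) + μ (S (-ε) ε') + μ (S (-ε) (-ε')) = 1 := by
    rw [← measure_union hd12 (hmeas _ _), ← measure_union hd3 (hmeas _ _),
      ← measure_union hd4 (hmeas _ _), hcover, measure_univ]
  rw [← h1, ← h2, ← h3] at hsum
  have h4 : (4 : ENNReal) * μ (S ε ε') = 1 := by
    rw [← hsum]; ring
  have hfin : μ (S ε ε') = 1 / 4 := by
    rw [ENNReal.eq_div_iff (by norm_num) (by norm_num)]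
    exact h4
  exact hfin
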